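/- Let σ = (a b; c d) be a matrix with entries in a complete nonarchimedean valuation ring R with uniformizer ϖ, satisfying c ∈ (ϖ), a ∈ R^×, and det σ ≠ 0. Then the weight-two action (σ·f)(x) = (ad−bc)(a−cx)^{-2} f((dx−b)/(a−cx)) preserves the subring Λ = R[[ϖx]] ⊆ R[[x]] of power series converging on the open ball of radius |ϖ|: if f ∈ Λ, then σ·f is a well-defined element of Λ. Moreover, if det σ = ϖ·u with u ∈ R^×, then σ·f ∈ ϖΛ. -/

import Mathlib

set_option linter.unusedSectionVars false
set_option maxHeartbeats 1000000

open Filter Topology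


open Filter Topology

section Aux

variable {K : Type*} [NontriviallyNormedField K] [CompleteSpace K] [IsUltrametricDist K]

/-- Ultrametric bound for a tsum. -/
lemma wt2_norm_tsum_le {ι : Type*} {h : ι → K} {C : ℝ} (hC : 0 ≤ C)
    (hb : ∀ i, ‖h i‖ ≤ C) : ‖∑' i, h i‖ ≤ C := by
  by_cases hs : Summable h
  · refine le_of_tendsto (hs.hasSum.norm) ?_
    filter_upwards with s
    exact IsUltrametricDist.norm_sum_le_of_forall_le_of_nonneg hC (fun i _ => hb i)
  · simpa [tsum_eq_zero_of_not_summable hs] using hC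

lemma wt2_tendsto_of_finite {ι : Type*} {h : ι → K}
    (H : ∀ ε : ℝ, 0 < ε → {i | ε ≤ ‖h i‖}.Finite) :
    Tendsto h cofinite (𝓝 0) := by
  rw [Metric.tendsto_nhds]
  intro ε hε
  rw [Filter.eventually_cofinite]
  refine (H ε hε).subset ?_
  intro i hi
  simp only [Set.mem_setOf_eq, dist_zero_right, not_lt] at hi ⊢
  exact hi

lemma wt2_finite_of_tendsto {ι : Type*} {h : ι → K}
    (H : Tendsto h cofinite (𝓝 0)) (ε : ℝ) (hε : 0 < ε) :
    {i | ε ≤ ‖h i‖}.Finite := by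
  have := Filter.eventually_cofinite.mp (Metric.tendsto_nhds.mp H ε hε)
  refine this.subset ?_
  intro i hi
  simp only [Set.mem_setOf_eq, dist_zero_right, not_lt] at hi ⊢
  exact hi

lemma wt2_summable_mul_cofinite {ι κ : Type*} {B : ι → K} {C : κ → K}
    (hB : Tendsto B cofinite (𝓝 0)) (hC : Tendsto C cofinite (𝓝 0)) :
    Summable (fun p : ι × κ => B p.1 * C p.2) := by
  obtain ⟨MB, hMB⟩ := (hB.norm.bddAbove_range_of_cofinite)
  obtain ⟨MC, hMC⟩ := (hC.norm.bddAbove_range_of_cofinite)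
  have hMB' : ∀ i, ‖B i‖ ≤ max MB 0 + 1 := fun i =>
    le_trans (le_trans (hMB (Set.mem_range_self i)) (le_max_left _ _)) (by linarith)
  have hMC' : ∀ k, ‖C k‖ ≤ max MC 0 + 1 := fun k =>
    le_trans (le_trans (hMC (Set.mem_range_self k)) (le_max_left _ _)) (by linarith)
  have hMBpos : (0:ℝ) < max MB 0 + 1 := by positivity
  have hMCpos : (0:ℝ) < max MC 0 + 1 := by positivity
  apply NonarchimedeanAddGroup.summable_of_tendsto_cofinite_zero
  apply wt2_tendsto_of_finite
  intro ε hε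
  refine ((wt2_finite_of_tendsto hB (ε / (max MC 0 + 1)) (by positivity)).prod
    (wt2_finite_of_tendsto hC (ε / (max MB 0 + 1)) (by positivity))).subset ?_
  rintro ⟨i, k⟩ hik
  simp only [Set.mem_setOf_eq, norm_mul] at hik
  constructor
  · show ε / (max MC 0 + 1) ≤ ‖B i‖
    rw [div_le_iff₀ hMCpos]
    calc ε ≤ ‖B i‖ * ‖C k‖ := hik
      _ ≤ ‖B i‖ * (max MC 0 + 1) :=
        mul_le_mul_of_nonneg_left (hMC' k) (norm_nonneg (B i))
  · show ε / (max MB 0 + 1) ≤ ‖C k‖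
    rw [div_le_iff₀ hMBpos]
    calc ε ≤ ‖B i‖ * ‖C k‖ := hik
      _ ≤ ‖C k‖ * (max MB 0 + 1) := by
        rw [mul_comm ‖B i‖ ‖C k‖]
        exact mul_le_mul_of_nonneg_left (hMB' i) (norm_nonneg (C k))

end Aux


namespace Wt2

variable {K : Type*} [NontriviallyNormedField K]

/-- Coefficient in the expansion of `(dx-b)^n (a-cx)^{-(n+2)}` (without the `a⁻¹^(n+2)`). -/
def A (a b c d : K) (n j k : ℕ) : K :=
  (n.choose j : K) * d ^ j * (-b) ^ (n - j) *
    (((k + (n + 1)).choose (n + 1) : K) * (c / a) ^ k)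

def F (f : ℕ → K) (a b c d : K) (n j k : ℕ) : K :=
  f n * (a⁻¹) ^ (n + 2) * A a b c d n j k

def w (f : ℕ → K) (a b c d : K) (n m : ℕ) : K :=
  ∑ p ∈ Finset.HasAntidiagonal.antidiagonal m, F f a b c d n p.1 p.2

noncomputable def gfun (f : ℕ → K) (a b c d : K) (m : ℕ) : K :=
  (a * d - b * c) * ∑' n, w f a b c d n m

lemma A_eq_zero (a b c d : K) {n j : ℕ} (k : ℕ) (h : n < j) : A a b c d n j k = 0 := by
  simp [A, Nat.choose_eq_zero_of_lt h]

lemma F_eq_zero (f : ℕ → K) (a b c d : K) {n j : ℕ} (k : ℕ) (h : n < j) :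
    F f a b c d n j k = 0 := by
  simp [F, A_eq_zero _ _ _ _ _ h]

end Wt2

section Bounds

variable {K : Type*} [NontriviallyNormedField K] [IsUltrametricDist K]
variable {ϖ a b c d : K}

lemma wt2_A_norm_le (hϖ1 : ‖ϖ‖ < 1) (ha : ‖a‖ = 1) (hb : ‖b‖ ≤ 1) (hd : ‖d‖ ≤ 1)
    (hc : ‖c‖ ≤ ‖ϖ‖) (n j k : ℕ) : ‖Wt2.A a b c d n j k‖ ≤ ‖ϖ‖ ^ k := by
  have hϖ0 : (0:ℝ) ≤ ‖ϖ‖ := norm_nonneg _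
  have h1 : ‖(n.choose j : K) * d ^ j * (-b) ^ (n - j)‖ ≤ 1 := by
    rw [norm_mul, norm_mul, norm_pow, norm_pow, norm_neg]
    exact mul_le_one₀ (mul_le_one₀ (IsUltrametricDist.norm_natCast_le_one K _)
      (by positivity) (pow_le_one₀ (norm_nonneg _) hd))
      (by positivity) (pow_le_one₀ (norm_nonneg _) hb)
  have h2 : ‖((k + (n + 1)).choose (n + 1) : K) * (c / a) ^ k‖ ≤ ‖ϖ‖ ^ k := by
    rw [norm_mul, norm_pow, norm_div, ha, div_one]
    calc ‖(((k + (n + 1)).choose (n + 1) : ℕ) : K)‖ * ‖c‖ ^ k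
        ≤ 1 * ‖ϖ‖ ^ k := by
          exact mul_le_mul (IsUltrametricDist.norm_natCast_le_one K _)
            (pow_le_pow_left₀ (norm_nonneg _) hc k) (by positivity) zero_le_one
      _ = ‖ϖ‖ ^ k := one_mul _
  calc ‖Wt2.A a b c d n j k‖
      = ‖(n.choose j : K) * d ^ j * (-b) ^ (n - j)‖ *
        ‖((k + (n + 1)).choose (n + 1) : K) * (c / a) ^ k‖ := norm_mul _ _
    _ ≤ 1 * ‖ϖ‖ ^ k := mul_le_mul h1 h2 (norm_nonneg _) zero_le_one
    _ = ‖ϖ‖ ^ k := one_mul _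

lemma wt2_F_norm_le {f : ℕ → K} (hϖ1 : ‖ϖ‖ < 1) (ha : ‖a‖ = 1) (hb : ‖b‖ ≤ 1) (hd : ‖d‖ ≤ 1)
    (hc : ‖c‖ ≤ ‖ϖ‖) (hf : ∀ n : ℕ, ‖f n‖ ≤ ‖ϖ‖ ^ n) (n j k : ℕ) :
    ‖Wt2.F f a b c d n j k‖ ≤ ‖ϖ‖ ^ (n + k) := by
  have hai : ‖a⁻¹‖ = 1 := by rw [norm_inv, ha, inv_one]
  calc ‖Wt2.F f a b c d n j k‖
      = ‖f n‖ * ‖a⁻¹‖ ^ (n + 2) * ‖Wt2.A a b c d n j k‖ := by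
        rw [Wt2.F, norm_mul, norm_mul, norm_pow]
    _ = ‖f n‖ * ‖Wt2.A a b c d n j k‖ := by rw [hai, one_pow, mul_one]
    _ ≤ ‖ϖ‖ ^ n * ‖ϖ‖ ^ k :=
        mul_le_mul (hf n) (wt2_A_norm_le hϖ1 ha hb hd hc n j k) (norm_nonneg _)
          (by positivity)
    _ = ‖ϖ‖ ^ (n + k) := (pow_add _ _ _).symm

lemma wt2_w_norm_le {f : ℕ → K} (hϖ1 : ‖ϖ‖ < 1) (ha : ‖a‖ = 1) (hb : ‖b‖ ≤ 1) (hd : ‖d‖ ≤ 1)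
    (hc : ‖c‖ ≤ ‖ϖ‖) (hf : ∀ n : ℕ, ‖f n‖ ≤ ‖ϖ‖ ^ n) (n m : ℕ) :
    ‖Wt2.w f a b c d n m‖ ≤ ‖ϖ‖ ^ (max n m) := by
  refine IsUltrametricDist.norm_sum_le_of_forall_le_of_nonneg (by positivity) ?_
  rintro ⟨j, k⟩ hp
  rw [Finset.HasAntidiagonal.mem_antidiagonal] at hp
  rcases le_or_gt j n with hjn | hjn
  · refine (wt2_F_norm_le hϖ1 ha hb hd hc hf n j k).trans ?_
    exact pow_le_pow_of_le_one (norm_nonneg _) hϖ1.le (by omega)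
  · rw [Wt2.F_eq_zero _ _ _ _ _ _ hjn, norm_zero]
    positivity

end Bounds

/-- The weight-two action `(σ·f)(x) = (ad−bc)(a−cx)^{-2} f((dx−b)/(a−cx))` of a matrix
`σ = (a b; c d)` with `c ∈ (ϖ)`, `a ∈ R^×`, `det σ ≠ 0` preserves the module
`Λ = R[[ϖx]]` of power series whose `n`-th coefficient has norm at most `‖ϖ‖ⁿ`;
moreover if `det σ = ϖ·(unit)` then `σ·f ∈ ϖΛ`. -/
theorem weight_two_action_preserves_Lambda {K : Type*} [NontriviallyNormedField K]
    [CompleteSpace K] [IsUltrametricDist K]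
    (ϖ a b c d : K) (hϖ0 : 0 < ‖ϖ‖) (hϖ1 : ‖ϖ‖ < 1)
    (ha : ‖a‖ = 1) (hb : ‖b‖ ≤ 1) (hd : ‖d‖ ≤ 1) (hc : ‖c‖ ≤ ‖ϖ‖)
    (hdet : a * d - b * c ≠ 0)
    (f : ℕ → K) (hf : ∀ n : ℕ, ‖f n‖ ≤ ‖ϖ‖ ^ n) :
    ∃ g : ℕ → K,
      (∀ n : ℕ, ‖g n‖ ≤ ‖ϖ‖ ^ n) ∧
      (∀ x : K, ‖x‖ < ‖ϖ‖⁻¹ →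
        HasSum (fun n : ℕ => g n * x ^ n)
          ((a * d - b * c) * ((a - c * x)⁻¹) ^ 2 *
            ∑' n : ℕ, f n * ((d * x - b) / (a - c * x)) ^ n)) ∧
      (‖a * d - b * c‖ = ‖ϖ‖ → ∀ n : ℕ, ‖g n‖ ≤ ‖ϖ‖ ^ (n + 1)) := by
  classical
  have hΔ1 : ‖a * d - b * c‖ ≤ 1 := by
    rw [sub_eq_add_neg]
    refine (IsUltrametricDist.norm_add_le_max _ _).trans (max_le ?_ ?_)
    · rw [norm_mul, ha, one_mul]; exact hd
    · rw [norm_neg, norm_mul]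
      exact mul_le_one₀ hb (norm_nonneg _) (hc.trans hϖ1.le)
  have ha0 : a ≠ 0 := by
    intro h; rw [h, norm_zero] at ha; exact one_ne_zero ha.symm
  have hwsum : ∀ m, Summable (fun n => Wt2.w f a b c d n m) := by
    intro m
    apply NonarchimedeanAddGroup.summable_of_tendsto_cofinite_zero
    rw [Nat.cofinite_eq_atTop]
    refine squeeze_zero_norm' (a := fun n => ‖ϖ‖ ^ n) ?_
      (tendsto_pow_atTop_nhds_zero_of_lt_one (norm_nonneg _) hϖ1)
    filter_upwards [Filter.eventually_ge_atTop m] with n hn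
    have := wt2_w_norm_le hϖ1 ha hb hd hc hf n m
    rwa [max_eq_left hn] at this
  have hgnorm : ∀ m, ‖Wt2.gfun f a b c d m‖ ≤ ‖a * d - b * c‖ * ‖ϖ‖ ^ m := by
    intro m
    rw [Wt2.gfun, norm_mul]
    refine mul_le_mul_of_nonneg_left ?_ (norm_nonneg _)
    refine wt2_norm_tsum_le (by positivity) (fun n => ?_)
    refine (wt2_w_norm_le hϖ1 ha hb hd hc hf n m).trans ?_
    exact pow_le_pow_of_le_one (norm_nonneg _) hϖ1.le (le_max_right _ _)
  refine ⟨Wt2.gfun f a b c d, ?_, ?_, ?_⟩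
  · intro m
    refine (hgnorm m).trans ?_
    calc ‖a * d - b * c‖ * ‖ϖ‖ ^ m ≤ 1 * ‖ϖ‖ ^ m :=
          mul_le_mul_of_nonneg_right hΔ1 (by positivity)
      _ = ‖ϖ‖ ^ m := one_mul _
  · -- the HasSum statement
    intro x hx
    have hϖx : ‖ϖ‖ * ‖x‖ < 1 := by
      have h1 : ‖ϖ‖ * ‖x‖ < ‖ϖ‖ * ‖ϖ‖⁻¹ := mul_lt_mul_of_pos_left hx hϖ0
      rwa [mul_inv_cancel₀ (ne_of_gt hϖ0)] at h1
    have hcx : ‖c * x‖ < 1 := by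
      rw [norm_mul]
      exact lt_of_le_of_lt (mul_le_mul_of_nonneg_right hc (norm_nonneg _)) hϖx
    have hr : ‖c * x / a‖ < 1 := by
      rw [norm_div, ha, div_one]; exact hcx
    have hax1 : (1 : ℝ) ≤ ‖a - c * x‖ := by
      have h1 : (1 : ℝ) ≤ max ‖a - c * x‖ ‖c * x‖ := by
        calc (1 : ℝ) = ‖a‖ := ha.symm
          _ = ‖a - c * x + c * x‖ := by rw [sub_add_cancel]
          _ ≤ _ := IsUltrametricDist.norm_add_le_max _ _
      exact (le_max_iff.mp h1).resolve_right (not_le.mpr hcx)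
    have hax0 : a - c * x ≠ 0 := by
      intro h; rw [h, norm_zero] at hax1; linarith
    have hfac : a - c * x = a * (1 - c * x / a) := by field_simp
    have h1r0 : (1 - c * x / a) ≠ 0 := by
      intro h
      apply hax0
      rw [hfac, h, mul_zero]
    set Bf : ℕ → ℕ → K := fun n j => (n.choose j : K) * d ^ j * (-b) ^ (n - j) * x ^ j with hBf
    set Cf : ℕ → ℕ → K :=
      fun n k => ((k + (n + 1)).choose (n + 1) : K) * (c * x / a) ^ k with hCf
    have hB : ∀ n, HasSum (Bf n) ((d * x - b) ^ n) := by
      intro n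
      have h0 : ∀ j ∉ Finset.range (n + 1), Bf n j = 0 := by
        intro j hj
        rw [Finset.mem_range, not_lt] at hj
        simp [hBf, Nat.choose_eq_zero_of_lt (by omega : n < j)]
      have hsum := hasSum_sum_of_ne_finset_zero (L := SummationFilter.unconditional ℕ) h0
      have h2 : (∑ j ∈ Finset.range (n + 1), Bf n j) = (d * x - b) ^ n := by
        rw [show d * x - b = d * x + (-b) from by ring, add_pow]
        refine Finset.sum_congr rfl (fun j hj => ?_)
        simp only [hBf]
        ring
      rwa [h2] at hsum
    have hC : ∀ n, HasSum (Cf n) (1 / (1 - c * x / a) ^ (n + 2)) := by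
      intro n
      exact hasSum_choose_mul_geometric_of_norm_lt_one (n + 1) hr
    have hBC : ∀ n, Summable (fun p : ℕ × ℕ => Bf n p.1 * Cf n p.2) := fun n =>
      wt2_summable_mul_cofinite (hB n).summable.tendsto_cofinite_zero
        (hC n).summable.tendsto_cofinite_zero
    have hprod : ∀ n, HasSum (fun p : ℕ × ℕ => Bf n p.1 * Cf n p.2)
        ((d * x - b) ^ n * (1 / (1 - c * x / a) ^ (n + 2))) := fun n =>
      (hB n).mul (hC n) (hBC n)
    set U : ℕ × ℕ × ℕ → K := fun p =>
      (a * d - b * c) * Wt2.F f a b c d p.1 p.2.1 p.2.2 * x ^ (p.2.1 + p.2.2) with hUdef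
    have hUBC : ∀ n j k, U (n, j, k) =
        ((a * d - b * c) * (f n * (a⁻¹) ^ (n + 2))) * (Bf n j * Cf n k) := by
      intro n j k
      simp only [hUdef, hBf, hCf, Wt2.F, Wt2.A]
      rw [pow_add]
      ring
    have hUzero : ∀ n j k : ℕ, n < j → U (n, j, k) = 0 := by
      intro n j k h
      simp [hUdef, Wt2.F_eq_zero _ _ _ _ _ _ h]
    set q : ℝ := max ‖ϖ‖ (‖ϖ‖ * ‖x‖) with hqdef
    have hq0 : 0 < q := lt_max_of_lt_left hϖ0
    have hq1 : q < 1 := max_lt hϖ1 hϖx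
    have hUnorm : ∀ n j k : ℕ, j ≤ n → ‖U (n, j, k)‖ ≤ q ^ (n + k) := by
      intro n j k hjn
      calc ‖U (n, j, k)‖
          = ‖a * d - b * c‖ * ‖Wt2.F f a b c d n j k‖ * ‖x‖ ^ (j + k) := by
            rw [hUdef, norm_mul, norm_mul, norm_pow]
        _ ≤ 1 * ‖ϖ‖ ^ (n + k) * ‖x‖ ^ (j + k) := by
            refine mul_le_mul (mul_le_mul hΔ1 (wt2_F_norm_le hϖ1 ha hb hd hc hf n j k)
              (norm_nonneg _) zero_le_one) le_rfl (by positivity) (by positivity)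
        _ = ‖ϖ‖ ^ (n - j) * (‖ϖ‖ * ‖x‖) ^ (j + k) := by
            rw [one_mul, show n + k = (n - j) + (j + k) from by omega]
            ring
        _ ≤ q ^ (n - j) * q ^ (j + k) :=
            mul_le_mul (pow_le_pow_left₀ (norm_nonneg _) (le_max_left _ _) _)
              (pow_le_pow_left₀ (by positivity) (le_max_right _ _) _)
              (by positivity) (by positivity)
        _ = q ^ (n + k) := by rw [← pow_add]; congr 1; omega
    have hUsum : Summable U := by
      apply NonarchimedeanAddGroup.summable_of_tendsto_cofinite_zero
      apply wt2_tendsto_of_finite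
      intro ε hε
      obtain ⟨N, hN⟩ := exists_pow_lt_of_lt_one hε hq1
      refine ((Set.finite_Iic N).prod ((Set.finite_Iic N).prod (Set.finite_Iic N))).subset ?_
      rintro ⟨n, j, k⟩ hp
      simp only [Set.mem_setOf_eq] at hp
      have hjn : j ≤ n := by
        by_contra h
        rw [hUzero n j k (by omega), norm_zero] at hp
        linarith
      have h2 : q ^ N < q ^ (n + k) := lt_of_lt_of_le hN (hp.trans (hUnorm n j k hjn))
      have h3 : n + k ≤ N := by
        by_contra h
        exact absurd h2 (not_lt.mpr (pow_le_pow_of_le_one hq0.le hq1.le (by omega)))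
      refine ⟨?_, ?_, ?_⟩ <;> simp only [Set.mem_Iic] <;> omega
    have hUS : HasSum U (∑' p, U p) := hUsum.hasSum
    have hinv : ∀ n : ℕ,
        (a⁻¹) ^ (n + 2) * (1 / (1 - c * x / a) ^ (n + 2)) = ((a - c * x)⁻¹) ^ (n + 2) := by
      intro n
      rw [hfac, mul_inv, mul_pow]
      congr 1
      rw [inv_pow, one_div]
    have htotal : (∑' p, U p) =
        (a * d - b * c) * ((a - c * x)⁻¹) ^ 2 *
          ∑' n, f n * ((d * x - b) / (a - c * x)) ^ n := by
      rw [Summable.tsum_prod hUsum, ← tsum_mul_left]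
      refine tsum_congr (fun n => ?_)
      calc (∑' jk : ℕ × ℕ, U (n, jk))
          = ∑' jk : ℕ × ℕ, ((a * d - b * c) * (f n * (a⁻¹) ^ (n + 2))) * (Bf n jk.1 * Cf n jk.2) :=
            tsum_congr (fun jk => hUBC n jk.1 jk.2)
        _ = ((a * d - b * c) * (f n * (a⁻¹) ^ (n + 2))) *
            ((d * x - b) ^ n * (1 / (1 - c * x / a) ^ (n + 2))) := by
            rw [tsum_mul_left, (hprod n).tsum_eq]
        _ = (a * d - b * c) * ((a - c * x)⁻¹) ^ 2 * (f n * ((d * x - b) / (a - c * x)) ^ n) := by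
            rw [div_pow (d * x - b)]
            linear_combination (a * d - b * c) * f n * (d * x - b) ^ n * hinv n
    rw [← htotal]
    -- regroup by total degree
    let e : (Σ m : ℕ, ℕ × {p : ℕ × ℕ // p ∈ Finset.HasAntidiagonal.antidiagonal m}) ≃ ℕ × ℕ × ℕ :=
      { toFun := fun s => (s.2.1, s.2.2.1.1, s.2.2.1.2)
        invFun := fun p => ⟨p.2.1 + p.2.2, p.1, ⟨(p.2.1, p.2.2), Finset.HasAntidiagonal.mem_antidiagonal.mpr rfl⟩⟩
        left_inv := by
          rintro ⟨m, n, ⟨⟨j, k⟩, h⟩⟩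
          rw [Finset.HasAntidiagonal.mem_antidiagonal] at h
          subst h
          rfl
        right_inv := fun p => rfl }
    have hUe : HasSum (fun s : Σ m : ℕ, ℕ × {p : ℕ × ℕ // p ∈ Finset.HasAntidiagonal.antidiagonal m} =>
        U (e s)) (∑' p, U p) := (Equiv.hasSum_iff e).mpr hUS
    refine HasSum.sigma hUe (fun m => ?_)
    have hfib : Summable (fun r : ℕ × {p : ℕ × ℕ // p ∈ Finset.HasAntidiagonal.antidiagonal m} =>
        U (e ⟨m, r⟩)) := hUe.summable.sigma_factor m
    have hstep : ∀ n : ℕ,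
        (∑' s : {p : ℕ × ℕ // p ∈ Finset.HasAntidiagonal.antidiagonal m}, U (e ⟨m, (n, s)⟩))
          = (a * d - b * c) * Wt2.w f a b c d n m * x ^ m := by
      intro n
      rw [tsum_fintype]
      calc (∑ s : {p : ℕ × ℕ // p ∈ Finset.HasAntidiagonal.antidiagonal m}, U (e ⟨m, (n, s)⟩))
          = ∑ p ∈ Finset.HasAntidiagonal.antidiagonal m, U (n, p.1, p.2) :=
            Finset.sum_coe_sort (Finset.HasAntidiagonal.antidiagonal m) (fun p => U (n, p.1, p.2))
        _ = ∑ p ∈ Finset.HasAntidiagonal.antidiagonal m,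
              (a * d - b * c) * Wt2.F f a b c d n p.1 p.2 * x ^ m := by
            refine Finset.sum_congr rfl (fun p hp => ?_)
            rw [Finset.HasAntidiagonal.mem_antidiagonal] at hp
            simp only [hUdef]
            rw [hp]
        _ = (a * d - b * c) * Wt2.w f a b c d n m * x ^ m := by
            rw [Wt2.w, Finset.mul_sum, Finset.sum_mul]
    have hval : (∑' r : ℕ × {p : ℕ × ℕ // p ∈ Finset.HasAntidiagonal.antidiagonal m}, U (e ⟨m, r⟩))
        = Wt2.gfun f a b c d m * x ^ m := by
      rw [Summable.tsum_prod hfib, tsum_congr hstep, tsum_mul_right, tsum_mul_left, Wt2.gfun]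
    rw [← hval]
    exact hfib.hasSum
  · intro hΔϖ m
    refine (hgnorm m).trans ?_
    rw [hΔϖ, pow_succ]
    exact le_of_eq (mul_comm _ _)
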